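/- Fix μ₁ ∈ ℝ, σ > 0, π ∈ (0,1) and x ∈ ℝ. Writing p_{μ₂}(x) = π φ_{μ₁,σ}(x) + (1−π) φ_{μ₂,σ}(x), the score of the mixture at x converges to the score of the first component: s_{p_{μ₂}}(x) → −(x−μ₁)/σ² as μ₂ → +∞. -/

import Mathlib

open MeasureTheory Filter

/-- Gaussian density with mean `μ` and standard deviation `σ`. -/
noncomputable def gaussian (μ σ : ℝ) (x : ℝ) : ℝ :=
  (σ * Real.sqrt (2 * Real.pi))⁻¹ * Real.exp (-(x - μ) ^ 2 / (2 * σ ^ 2))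

/-- The score of a density `ρ`: the derivative of its log. -/
noncomputable def score (ρ : ℝ → ℝ) (x : ℝ) : ℝ :=
  deriv (fun y => Real.log (ρ y)) x

/-- Fisher divergence between densities `q` and `p`. -/
noncomputable def fisherDiv (q p : ℝ → ℝ) : ℝ :=
  ∫ x : ℝ, q x * (score q x - score p x) ^ 2

lemma gaussian_pos (μ σ : ℝ) (hσ : 0 < σ) (y : ℝ) : 0 < gaussian μ σ y := by
  unfold gaussian
  positivity

lemma hasDerivAt_gaussian (μ σ : ℝ) (hσ : 0 < σ) (y : ℝ) :
    HasDerivAt (gaussian μ σ) (gaussian μ σ y * (-(y - μ) / σ ^ 2)) y := by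
  have h1 : HasDerivAt (fun z : ℝ => -(z - μ) ^ 2 / (2 * σ ^ 2)) (-(y - μ) / σ ^ 2) y := by
    have h := (((hasDerivAt_id y).sub_const μ).pow 2).neg.div_const (2 * σ ^ 2)
    refine h.congr_deriv ?_
    simp only [id]
    field_simp
    ring
  have h2 := (h1.exp).const_mul ((σ * Real.sqrt (2 * Real.pi))⁻¹)
  refine h2.congr_deriv ?_
  unfold gaussian
  ring

lemma aux_tendsto (c : ℝ) (hc : 0 < c) :
    Tendsto (fun t : ℝ => t * Real.exp (-(t ^ 2) / c)) atTop (nhds 0) := by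
  have h1 : Tendsto (fun u : ℝ => u * Real.exp (-u)) atTop (nhds 0) := by
    simpa using Real.tendsto_pow_mul_exp_neg_atTop_nhds_zero 1
  have h2 : Tendsto (fun t : ℝ => t ^ 2 / c) atTop atTop :=
    (tendsto_pow_atTop two_ne_zero).atTop_div_const hc
  have h3 := h1.comp h2
  have h4 : Tendsto (fun t : ℝ => c * t⁻¹) atTop (nhds 0) := by
    simpa using tendsto_inv_atTop_zero.const_mul c
  have h5 := h4.mul h3
  rw [zero_mul] at h5
  refine h5.congr' ?_
  filter_upwards [eventually_gt_atTop 0] with t ht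
  have hc' := hc.ne'
  simp only [Function.comp]
  field_simp

/-- as `μ₂ → +∞` the mixture score converges pointwise to the score
of the first component. -/
theorem mixture_score_tendsto_first_component (μ₁ σ w : ℝ) (hσ : 0 < σ)
    (hw : w ∈ Set.Ioo (0 : ℝ) 1) (x : ℝ) :
    Tendsto (fun μ₂ => score (fun y => w * gaussian μ₁ σ y + (1 - w) * gaussian μ₂ σ y) x)
      atTop (nhds (-(x - μ₁) / σ ^ 2)) := by
  obtain ⟨hw0, hw1⟩ := hw
  have hw1' : 0 < 1 - w := by linarith
  have hg1 := gaussian_pos μ₁ σ hσ x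
  -- closed form of the score
  have key : ∀ μ₂ : ℝ,
      score (fun y => w * gaussian μ₁ σ y + (1 - w) * gaussian μ₂ σ y) x =
      (w * (gaussian μ₁ σ x * (-(x - μ₁) / σ ^ 2)) +
        (1 - w) * (gaussian μ₂ σ x * (-(x - μ₂) / σ ^ 2))) /
      (w * gaussian μ₁ σ x + (1 - w) * gaussian μ₂ σ x) := by
    intro μ₂
    have hf : HasDerivAt (fun y => w * gaussian μ₁ σ y + (1 - w) * gaussian μ₂ σ y)
        (w * (gaussian μ₁ σ x * (-(x - μ₁) / σ ^ 2)) +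
          (1 - w) * (gaussian μ₂ σ x * (-(x - μ₂) / σ ^ 2))) x :=
      ((hasDerivAt_gaussian μ₁ σ hσ x).const_mul w).add
        ((hasDerivAt_gaussian μ₂ σ hσ x).const_mul (1 - w))
    have hne : w * gaussian μ₁ σ x + (1 - w) * gaussian μ₂ σ x ≠ 0 := by
      have := gaussian_pos μ₂ σ hσ x
      positivity
    exact (hf.log hne).deriv
  simp only [key]
  -- tendsto of g₂(x) to 0
  have hsq : Tendsto (fun μ₂ : ℝ => -(x - μ₂) ^ 2 / (2 * σ ^ 2)) atTop atBot := by
    have h1 : Tendsto (fun μ₂ : ℝ => (x - μ₂) ^ 2) atTop atTop := by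
      have : Tendsto (fun μ₂ : ℝ => μ₂ - x) atTop atTop :=
        tendsto_atTop_add_const_right _ (-x) tendsto_id
      have h := (tendsto_pow_atTop two_ne_zero).comp this
      refine h.congr fun μ₂ => ?_
      simp [Function.comp]
      ring
    have h2 := h1.atTop_div_const (by positivity : (0:ℝ) < 2 * σ ^ 2)
    have h3 := tendsto_neg_atTop_atBot.comp h2
    refine h3.congr fun μ₂ => ?_
    simp [Function.comp, neg_div]
  have hg2 : Tendsto (fun μ₂ : ℝ => gaussian μ₂ σ x) atTop (nhds 0) := by
    unfold gaussian
    have := (Real.tendsto_exp_atBot).comp hsq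
    simpa using this.const_mul ((σ * Real.sqrt (2 * Real.pi))⁻¹)
  -- tendsto of g₂(x) * score term to 0
  have hg2' : Tendsto (fun μ₂ : ℝ => gaussian μ₂ σ x * (-(x - μ₂) / σ ^ 2)) atTop (nhds 0) := by
    have hbase := aux_tendsto (2 * σ ^ 2) (by positivity)
    have hcomp := hbase.comp (tendsto_atTop_add_const_right atTop (-x) tendsto_id)
    have := (hcomp.const_mul ((σ * Real.sqrt (2 * Real.pi))⁻¹ / σ ^ 2))
    rw [mul_zero] at this
    refine this.congr fun μ₂ => ?_
    unfold gaussian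
    simp only [Function.comp, id]
    have hσ' := hσ.ne'
    have : (x - μ₂) ^ 2 = (μ₂ + -x) ^ 2 := by ring
    rw [this]
    field_simp
    ring
  have hnum : Tendsto (fun μ₂ : ℝ =>
      w * (gaussian μ₁ σ x * (-(x - μ₁) / σ ^ 2)) +
        (1 - w) * (gaussian μ₂ σ x * (-(x - μ₂) / σ ^ 2))) atTop
      (nhds (w * (gaussian μ₁ σ x * (-(x - μ₁) / σ ^ 2)))) := by
    have := (hg2'.const_mul (1 - w))
    rw [mul_zero] at this
    simpa using (tendsto_const_nhds.add this)
  have hden : Tendsto (fun μ₂ : ℝ => w * gaussian μ₁ σ x + (1 - w) * gaussian μ₂ σ x) atTop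
      (nhds (w * gaussian μ₁ σ x)) := by
    have := (hg2.const_mul (1 - w))
    rw [mul_zero] at this
    simpa using (tendsto_const_nhds.add this)
  have hdne : w * gaussian μ₁ σ x ≠ 0 := by positivity
  have := hnum.div hden hdne
  convert this using 2
  · rfl
  · field_simp
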